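/- Let S and M = LᵀL be p × p positive semidefinite matrices, and let μ exceed λ_max(S)·λ_max(M), the product of their largest eigenvalues. Then the function f(P) = (1/2)·tr(L P S Pᵀ Lᵀ) − (μ/2)·‖P‖_F² is concave on matrix space, and consequently its minimum over the Birkhoff polytope of doubly stochastic matrices is attained at an extreme point, i.e., at a permutation matrix. -/

import Mathlib

open Matrix BigOperators

def IsDoublyStochastic {p : ℕ} (P : Matrix (Fin p) (Fin p) ℝ) : Prop :=
  (∀ i j, 0 ≤ P i j) ∧ (∀ i, ∑ j, P i j = 1) ∧ (∀ j, ∑ i, P i j = 1)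

def IsPermMatrix {p : ℕ} (P : Matrix (Fin p) (Fin p) ℝ) : Prop :=
  ∃ σ : Equiv.Perm (Fin p), P = σ.permMatrix ℝ

/-- trace of `Aᴴ * A` is nonnegative. -/
lemma aux_trace_conj_self_nonneg {p q : ℕ} (A : Matrix (Fin p) (Fin q) ℝ) :
    0 ≤ (Aᴴ * A).trace := by
  simp only [Matrix.trace, Matrix.diag, Matrix.mul_apply, Matrix.conjTranspose_apply,
    star_trivial]
  exact Finset.sum_nonneg fun i _ => Finset.sum_nonneg fun j _ => mul_self_nonneg _

/-- trace of a product of PSD matrices is nonnegative. -/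
lemma aux_trace_psd_mul_nonneg {p : ℕ} {A B : Matrix (Fin p) (Fin p) ℝ}
    (hA : A.PosSemidef) (hB : B.PosSemidef) : 0 ≤ (A * B).trace := by
  obtain ⟨C, rfl⟩ : ∃ C : Matrix (Fin p) (Fin p) ℝ, A = Cᴴ * C := by
    open scoped MatrixOrder Matrix.Norms.L2Operator in
    obtain ⟨B, rfl⟩ := CStarAlgebra.nonneg_iff_eq_star_mul_self.mp hA.nonneg
    exact ⟨B, rfl⟩
  obtain ⟨D, rfl⟩ : ∃ D : Matrix (Fin p) (Fin p) ℝ, B = Dᴴ * D := by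
    open scoped MatrixOrder Matrix.Norms.L2Operator in
    obtain ⟨B', rfl⟩ := CStarAlgebra.nonneg_iff_eq_star_mul_self.mp hB.nonneg
    exact ⟨B', rfl⟩
  have : (Cᴴ * C * (Dᴴ * D)).trace = ((D * Cᴴ)ᴴ * (D * Cᴴ)).trace := by
    simp only [Matrix.conjTranspose_mul, Matrix.conjTranspose_conjTranspose, Matrix.mul_assoc]
    rw [Matrix.trace_mul_comm]
    simp only [Matrix.mul_assoc]
  rw [this]
  exact aux_trace_conj_self_nonneg _

/-- If all eigenvalues of PSD `A` are at most `c`, then `c•1 - A` is PSD. -/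
lemma aux_smul_one_sub_psd {p : ℕ} {A : Matrix (Fin p) (Fin p) ℝ} (hA : A.PosSemidef) {c : ℝ}
    (hc : ∀ i, hA.1.eigenvalues i ≤ c) :
    (c • (1 : Matrix (Fin p) (Fin p) ℝ) - A).PosSemidef := by
  have hspec := hA.1.spectral_theorem
  rw [Unitary.conjStarAlgAut_apply] at hspec
  set U : Matrix (Fin p) (Fin p) ℝ := (hA.1.eigenvectorUnitary : Matrix (Fin p) (Fin p) ℝ)
    with hU
  have hUU : U * star U = 1 := Matrix.mem_unitaryGroup_iff.mp hA.1.eigenvectorUnitary.2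
  have key : c • (1 : Matrix (Fin p) (Fin p) ℝ) - A
      = U * Matrix.diagonal (fun i => c - hA.1.eigenvalues i) * star U := by
    have hd : Matrix.diagonal (fun i => c - hA.1.eigenvalues i)
        = c • (1 : Matrix (Fin p) (Fin p) ℝ)
          - Matrix.diagonal (RCLike.ofReal ∘ hA.1.eigenvalues) := by
      ext i j
      by_cases h : i = j <;> simp [Matrix.diagonal_apply, Matrix.one_apply, h]
    rw [hd, Matrix.mul_sub, Matrix.sub_mul, ← hspec]
    congr 1
    rw [Matrix.mul_smul, Matrix.smul_mul, Matrix.mul_one, hUU]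
  rw [key]
  exact (Matrix.posSemidef_diagonal_iff.mpr
    fun i => sub_nonneg.mpr (hc i)).mul_mul_conjTranspose_same U

/-- The key bound: the quadratic form is dominated by `μ` times the Frobenius norm squared. -/
lemma aux_key_bound {p : ℕ} (hp : 0 < p) (S L : Matrix (Fin p) (Fin p) ℝ) (hS : S.PosSemidef)
    (hM : (Lᵀ * L).PosSemidef) (μ : ℝ)
    (hμ : (⨆ i, hS.1.eigenvalues i) * (⨆ i, hM.1.eigenvalues i) < μ)
    (P : Matrix (Fin p) (Fin p) ℝ) :
    (L * P * S * Pᵀ * Lᵀ).trace ≤ μ * ∑ i, ∑ j, (P i j) ^ 2 := by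
  haveI : Nonempty (Fin p) := ⟨⟨0, hp⟩⟩
  set s := ⨆ i, hS.1.eigenvalues i with hs
  set m := ⨆ i, hM.1.eigenvalues i with hm
  have hs_le : ∀ i, hS.1.eigenvalues i ≤ s :=
    fun i => le_ciSup (Set.Finite.bddAbove (Set.finite_range _)) i
  have hm_le : ∀ i, hM.1.eigenvalues i ≤ m :=
    fun i => le_ciSup (Set.Finite.bddAbove (Set.finite_range _)) i
  have hs0 : 0 ≤ s := (hS.eigenvalues_nonneg (Classical.arbitrary _)).trans (hs_le _)
  have hm0 : 0 ≤ m := (hM.eigenvalues_nonneg (Classical.arbitrary _)).trans (hm_le _)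
  -- rewrite the trace
  have htr : (L * P * S * Pᵀ * Lᵀ).trace = ((Lᵀ * L) * (P * S * Pᵀ)).trace := by
    rw [Matrix.trace_mul_comm]
    simp only [Matrix.mul_assoc]
  have hPPt : (P * Pᵀ).PosSemidef := by
    have := Matrix.posSemidef_self_mul_conjTranspose P
    simpa using this
  -- step 1 : tr(M (P S Pᵀ)) ≤ s * tr(M (P Pᵀ))
  have hstep1 : ((Lᵀ * L) * (P * S * Pᵀ)).trace ≤ s * ((Lᵀ * L) * (P * Pᵀ)).trace := by
    have hpsd : (P * (s • (1 : Matrix (Fin p) (Fin p) ℝ) - S) * Pᴴ).PosSemidef :=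
      (aux_smul_one_sub_psd hS hs_le).mul_mul_conjTranspose_same P
    have h0 := aux_trace_psd_mul_nonneg hM hpsd
    have hexpand : P * (s • (1 : Matrix (Fin p) (Fin p) ℝ) - S) * Pᴴ
        = s • (P * Pᵀ) - P * S * Pᵀ := by
      rw [Matrix.mul_sub, Matrix.sub_mul, Matrix.mul_smul, Matrix.mul_one, Matrix.smul_mul]
      rfl
    rw [hexpand, Matrix.mul_sub, Matrix.trace_sub, Matrix.mul_smul, Matrix.trace_smul,
      smul_eq_mul] at h0
    linarith
  -- step 2 : tr(M (P Pᵀ)) ≤ m * tr(P Pᵀ)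
  have hstep2 : ((Lᵀ * L) * (P * Pᵀ)).trace ≤ m * (P * Pᵀ).trace := by
    have h0 := aux_trace_psd_mul_nonneg (aux_smul_one_sub_psd hM hm_le) hPPt
    rw [Matrix.sub_mul, Matrix.trace_sub, Matrix.smul_mul, Matrix.one_mul, Matrix.trace_smul,
      smul_eq_mul] at h0
    linarith
  have hfro : (P * Pᵀ).trace = ∑ i, ∑ j, (P i j) ^ 2 := by
    simp only [Matrix.trace, Matrix.diag, Matrix.mul_apply, Matrix.transpose_apply, sq]
  have hfro0 : 0 ≤ ∑ i, ∑ j, (P i j) ^ 2 :=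
    Finset.sum_nonneg fun i _ => Finset.sum_nonneg fun j _ => sq_nonneg _
  have hMP0 : 0 ≤ ((Lᵀ * L) * (P * Pᵀ)).trace := aux_trace_psd_mul_nonneg hM hPPt
  rw [htr]
  calc ((Lᵀ * L) * (P * S * Pᵀ)).trace ≤ s * ((Lᵀ * L) * (P * Pᵀ)).trace := hstep1
    _ ≤ s * (m * (P * Pᵀ).trace) := by
        exact mul_le_mul_of_nonneg_left hstep2 hs0
    _ = (s * m) * ∑ i, ∑ j, (P i j) ^ 2 := by rw [hfro]; ring
    _ ≤ μ * ∑ i, ∑ j, (P i j) ^ 2 := mul_le_mul_of_nonneg_right hμ.le hfro0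

/-- the symmetric bilinear form underlying the objective. -/
noncomputable def cfun {p : ℕ} (S L : Matrix (Fin p) (Fin p) ℝ) (μ : ℝ)
    (P Q : Matrix (Fin p) (Fin p) ℝ) : ℝ :=
  (L * P * S * Qᵀ * Lᵀ).trace - μ * ∑ i, ∑ j, P i j * Q i j

lemma cfun_add_left {p : ℕ} (S L : Matrix (Fin p) (Fin p) ℝ) (μ : ℝ)
    (P P' Q : Matrix (Fin p) (Fin p) ℝ) :
    cfun S L μ (P + P') Q = cfun S L μ P Q + cfun S L μ P' Q := by
  simp only [cfun, Matrix.mul_add, Matrix.add_mul, Matrix.trace_add, Matrix.add_apply, add_mul,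
    Finset.sum_add_distrib, mul_add]
  ring

lemma cfun_smul_left {p : ℕ} (S L : Matrix (Fin p) (Fin p) ℝ) (μ : ℝ) (a : ℝ)
    (P Q : Matrix (Fin p) (Fin p) ℝ) :
    cfun S L μ (a • P) Q = a * cfun S L μ P Q := by
  unfold cfun
  have h1 : (L * (a • P) * S * Qᵀ * Lᵀ).trace = a * (L * P * S * Qᵀ * Lᵀ).trace := by
    rw [Matrix.mul_smul, Matrix.smul_mul, Matrix.smul_mul, Matrix.smul_mul, Matrix.trace_smul,
      smul_eq_mul]
  have h2 : ∑ i, ∑ j, (a • P) i j * Q i j = a * ∑ i, ∑ j, P i j * Q i j := by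
    simp only [Matrix.smul_apply, smul_eq_mul, Finset.mul_sum, mul_assoc]
  rw [h1, h2]
  ring

lemma cfun_symm {p : ℕ} (S L : Matrix (Fin p) (Fin p) ℝ) (μ : ℝ) (hSs : Sᵀ = S)
    (P Q : Matrix (Fin p) (Fin p) ℝ) :
    cfun S L μ P Q = cfun S L μ Q P := by
  unfold cfun
  congr 1
  · rw [← Matrix.trace_transpose (L * P * S * Qᵀ * Lᵀ)]
    simp [Matrix.transpose_mul, Matrix.mul_assoc, hSs]
  · congr 1
    exact Finset.sum_congr rfl fun i _ => Finset.sum_congr rfl fun j _ => mul_comm _ _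

lemma cfun_add_right {p : ℕ} (S L : Matrix (Fin p) (Fin p) ℝ) (μ : ℝ) (hSs : Sᵀ = S)
    (P Q Q' : Matrix (Fin p) (Fin p) ℝ) :
    cfun S L μ P (Q + Q') = cfun S L μ P Q + cfun S L μ P Q' := by
  rw [cfun_symm S L μ hSs, cfun_add_left, cfun_symm S L μ hSs Q P, cfun_symm S L μ hSs Q' P]

lemma cfun_smul_right {p : ℕ} (S L : Matrix (Fin p) (Fin p) ℝ) (μ : ℝ) (hSs : Sᵀ = S) (a : ℝ)
    (P Q : Matrix (Fin p) (Fin p) ℝ) :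
    cfun S L μ P (a • Q) = a * cfun S L μ P Q := by
  rw [cfun_symm S L μ hSs, cfun_smul_left, cfun_symm S L μ hSs Q P]

/-- If `μ > λ_max(S)·λ_max(LᵀL)` then `P ↦ (1/2)·tr(L P S Pᵀ Lᵀ) − (μ/2)·‖P‖_F²`
is concave on matrix space and its minimum over the Birkhoff polytope is attained
at a permutation matrix. -/
theorem concavity_and_permutation_minimizer {p : ℕ} (hp : 0 < p)
    (S L : Matrix (Fin p) (Fin p) ℝ) (hS : S.PosSemidef)
    (hM : (Lᵀ * L).PosSemidef) (μ : ℝ)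
    (hμ : (⨆ i, hS.1.eigenvalues i) * (⨆ i, hM.1.eigenvalues i) < μ) :
    ConcaveOn ℝ Set.univ
      (fun P : Matrix (Fin p) (Fin p) ℝ =>
        (1 / 2) * (L * P * S * Pᵀ * Lᵀ).trace -
          (μ / 2) * ∑ i, ∑ j, (P i j) ^ 2) ∧
    ∃ P : Matrix (Fin p) (Fin p) ℝ, IsPermMatrix P ∧
      ∀ Q : Matrix (Fin p) (Fin p) ℝ, IsDoublyStochastic Q →
        (1 / 2) * (L * P * S * Pᵀ * Lᵀ).trace -
            (μ / 2) * ∑ i, ∑ j, (P i j) ^ 2 ≤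
          (1 / 2) * (L * Q * S * Qᵀ * Lᵀ).trace -
            (μ / 2) * ∑ i, ∑ j, (Q i j) ^ 2 := by
  have hSs : Sᵀ = S := hS.1
  set f : Matrix (Fin p) (Fin p) ℝ → ℝ := fun P =>
      (1 / 2) * (L * P * S * Pᵀ * Lᵀ).trace - (μ / 2) * ∑ i, ∑ j, (P i j) ^ 2 with hf
  have hfc : ∀ z, f z = (1 / 2) * cfun S L μ z z := by
    intro z
    simp only [hf, cfun, sq]
    ring
  have hneg : ∀ z, cfun S L μ z z ≤ 0 := by
    intro z
    have := aux_key_bound hp S L hS hM μ hμ z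
    simp only [cfun, sq] at this ⊢
    linarith
  have hconc : ConcaveOn ℝ Set.univ f := by
    refine ⟨convex_univ, fun x _ y _ a b ha hb hab => ?_⟩
    simp only [smul_eq_mul, hfc]
    have h1 : cfun S L μ (a • x + b • y) (a • x + b • y)
        = a * a * cfun S L μ x x + a * b * cfun S L μ x y + b * a * cfun S L μ y x
          + b * b * cfun S L μ y y := by
      rw [cfun_add_left, cfun_smul_left, cfun_smul_left,
        cfun_add_right S L μ hSs, cfun_add_right S L μ hSs,
        cfun_smul_right S L μ hSs, cfun_smul_right S L μ hSs,
        cfun_smul_right S L μ hSs, cfun_smul_right S L μ hSs]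
      ring
    have h2 : cfun S L μ (x - y) (x - y)
        = cfun S L μ x x - cfun S L μ x y - cfun S L μ y x + cfun S L μ y y := by
      have hxy : x - y = x + (-1 : ℝ) • y := by
        rw [neg_one_smul]; abel
      rw [hxy, cfun_add_left, cfun_smul_left,
        cfun_add_right S L μ hSs, cfun_add_right S L μ hSs,
        cfun_smul_right S L μ hSs, cfun_smul_right S L μ hSs]
      ring
    have hsym : cfun S L μ x y = cfun S L μ y x := cfun_symm S L μ hSs x y
    have h0 : 0 ≤ (a * b) * (-(1 / 2) * cfun S L μ (x - y) (x - y)) :=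
      mul_nonneg (mul_nonneg ha hb) (by nlinarith [hneg (x - y)])
    have hid : (1 / 2) * cfun S L μ (a • x + b • y) (a • x + b • y)
        - (a * ((1 / 2) * cfun S L μ x x) + b * ((1 / 2) * cfun S L μ y y))
        = (a * b) * (-(1 / 2) * cfun S L μ (x - y) (x - y)) := by
      rw [h1, h2, hsym]
      linear_combination (a * (1 / 2) * cfun S L μ x x + b * (1 / 2) * cfun S L μ y y) * hab
    linarith
  refine ⟨hconc, ?_⟩
  obtain ⟨σ₀, -, hmin⟩ := Finset.exists_min_image (Finset.univ : Finset (Equiv.Perm (Fin p)))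
    (fun σ => f (σ.permMatrix ℝ)) ⟨1, Finset.mem_univ 1⟩
  refine ⟨σ₀.permMatrix ℝ, ⟨σ₀, rfl⟩, fun Q hQ => ?_⟩
  have hQmem : Q ∈ doublyStochastic ℝ (Fin p) :=
    mem_doublyStochastic_iff_sum.mpr ⟨hQ.1, hQ.2.1, hQ.2.2⟩
  have hQch : Q ∈ convexHull ℝ
      {P : Matrix (Fin p) (Fin p) ℝ | ∃ σ : Equiv.Perm (Fin p), σ.permMatrix ℝ = P} := by
    rw [← doublyStochastic_eq_convexHull_permMatrix]
    exact hQmem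
  obtain ⟨y, hy, hyQ⟩ := hconc.exists_le_of_mem_convexHull (Set.subset_univ _) hQch
  obtain ⟨σ, rfl⟩ := hy
  exact le_trans (hmin σ (Finset.mem_univ σ)) hyQ
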